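/- Let 𝔄₁₅ = {(a₀,a₁,a₂,a₃) ∈ (ℤ/15ℤ)⁴ : each aᵢ ≠ 0 and a₀+a₁+a₂+a₃ = 0}. For α ∈ 𝔄₁₅, let bᵢ ∈ {1,…,14} be the representative of aᵢ, and say α ∈ 𝔗₁₅ if b₀+b₁+b₂+b₃ equals 15 or 45. Define C = {(c₁,c₂,c₃) ∈ (ℤ/15ℤ)³ : c₁+3c₂+7c₃ = 3c₁+7c₂ = 7c₁+c₃ = c₂+3c₃}, and call α G-invariant if a₁c₁+a₂c₂+a₃c₃ = 0 for all (c₁,c₂,c₃) ∈ C. Then the set 𝔊𝔗₁₅^G := {α ∈ 𝔄₁₅ : α is G-invariant and k·α ∈ 𝔗₁₅ for some unit k of ℤ/15ℤ} is exactly the orbit {k·(1,2,4,8) : k ∈ (ℤ/15ℤ)ˣ}, and it has exactly 8 elements. -/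

import Mathlib

/-- The additive incarnation of the covering group `G` of the dominant map
`φ: S₁₅ ⇢ Y` from the degree-15 Fermat surface to the quintic
`yzw³ + xyz³ + wxy³ + zwx³ = 0`. -/
def coverGroupC : Set (Fin 3 → ZMod 15) :=
  {c | c 0 + 3 * c 1 + 7 * c 2 = 3 * c 0 + 7 * c 1 ∧
       3 * c 0 + 7 * c 1 = 7 * c 0 + c 2 ∧
       7 * c 0 + c 2 = c 1 + 3 * c 2}

/-- The characters `α ∈ 𝔄₁₅` (all `aᵢ ≠ 0`, `Σ aᵢ = 0`) that are `G`-invariant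
and have some unit multiple `k·α` in `𝔗₁₅` (sum of representatives equal to
`15` or `45`) form exactly the `(ℤ/15ℤ)ˣ`-orbit of `(1,2,4,8)`, which has
exactly `8` elements. -/
theorem GT15G_orbit :
    ({a : Fin 4 → ZMod 15 |
        (∀ i, a i ≠ 0) ∧ a 0 + a 1 + a 2 + a 3 = 0 ∧
        (∀ c ∈ coverGroupC, a 1 * c 0 + a 2 * c 1 + a 3 * c 2 = 0) ∧
        ∃ k : (ZMod 15)ˣ,
          ((k : ZMod 15) * a 0).val + ((k : ZMod 15) * a 1).val +
            ((k : ZMod 15) * a 2).val + ((k : ZMod 15) * a 3).val = 15 ∨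
          ((k : ZMod 15) * a 0).val + ((k : ZMod 15) * a 1).val +
            ((k : ZMod 15) * a 2).val + ((k : ZMod 15) * a 3).val = 45}
      = {a | ∃ k : (ZMod 15)ˣ, a = (k : ZMod 15) • ![1, 2, 4, 8]}) ∧
    ({a : Fin 4 → ZMod 15 |
        (∀ i, a i ≠ 0) ∧ a 0 + a 1 + a 2 + a 3 = 0 ∧
        (∀ c ∈ coverGroupC, a 1 * c 0 + a 2 * c 1 + a 3 * c 2 = 0) ∧
        ∃ k : (ZMod 15)ˣ,
          ((k : ZMod 15) * a 0).val + ((k : ZMod 15) * a 1).val +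
            ((k : ZMod 15) * a 2).val + ((k : ZMod 15) * a 3).val = 15 ∨
          ((k : ZMod 15) * a 0).val + ((k : ZMod 15) * a 1).val +
            ((k : ZMod 15) * a 2).val + ((k : ZMod 15) * a 3).val = 45}).ncard = 8 := by
  haveI : Nontrivial (ZMod 15) := ⟨⟨0, 1, by decide⟩⟩
  have h15 : (15 : ZMod 15) = 0 := by decide
  have key : ∀ w : ZMod 15,
      ((2*w).val + (4*w).val + (8*w).val + w.val = 15 ∨
       (2*w).val + (4*w).val + (8*w).val + w.val = 45) → ∃ v : ZMod 15, w * v = 1 := by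
    decide
  have hEq : ({a : Fin 4 → ZMod 15 |
        (∀ i, a i ≠ 0) ∧ a 0 + a 1 + a 2 + a 3 = 0 ∧
        (∀ c ∈ coverGroupC, a 1 * c 0 + a 2 * c 1 + a 3 * c 2 = 0) ∧
        ∃ k : (ZMod 15)ˣ,
          ((k : ZMod 15) * a 0).val + ((k : ZMod 15) * a 1).val +
            ((k : ZMod 15) * a 2).val + ((k : ZMod 15) * a 3).val = 15 ∨
          ((k : ZMod 15) * a 0).val + ((k : ZMod 15) * a 1).val +
            ((k : ZMod 15) * a 2).val + ((k : ZMod 15) * a 3).val = 45}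
      = {a | ∃ k : (ZMod 15)ˣ, a = (k : ZMod 15) • ![1, 2, 4, 8]}) := by
    ext a
    simp only [Set.mem_setOf_eq]
    constructor
    · rintro ⟨hne, hsum, hG, k, hk⟩
      have hmem1 : (![0,1,7] : Fin 3 → ZMod 15) ∈ coverGroupC := by
        refine ⟨by decide, by decide, by decide⟩
      have hmem2 : (![1,0,11] : Fin 3 → ZMod 15) ∈ coverGroupC := by
        refine ⟨by decide, by decide, by decide⟩
      have t1 := hG _ hmem1
      have t2 := hG _ hmem2
      simp only [Matrix.cons_val_zero, Matrix.cons_val_one, Matrix.head_cons,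
        Matrix.cons_val_two, Matrix.tail_cons] at t1 t2
      have e2 : a 2 = 8 * a 3 := by linear_combination t1 - a 3 * h15
      have e1 : a 1 = 4 * a 3 := by linear_combination t2 - a 3 * h15
      have e0 : a 0 = 2 * a 3 := by linear_combination hsum - e1 - e2 - a 3 * h15
      have h0 : (k : ZMod 15) * a 0 = 2 * ((k : ZMod 15) * a 3) := by rw [e0]; ring
      have h1 : (k : ZMod 15) * a 1 = 4 * ((k : ZMod 15) * a 3) := by rw [e1]; ring
      have h2 : (k : ZMod 15) * a 2 = 8 * ((k : ZMod 15) * a 3) := by rw [e2]; ring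
      rw [h0, h1, h2] at hk
      obtain ⟨v, hv⟩ := key _ hk
      have hunit : IsUnit (2 * a 3) := by
        refine IsUnit.of_mul_eq_one (8 * ((k : ZMod 15) * v)) ?_
        linear_combination 16 * hv + h15
      obtain ⟨K, hK⟩ := hunit
      refine ⟨K, funext fun i => ?_⟩
      fin_cases i
      · show a 0 = (K : ZMod 15) * 1
        rw [hK]; linear_combination e0
      · show a 1 = (K : ZMod 15) * 2
        rw [hK]; linear_combination e1
      · show a 2 = (K : ZMod 15) * 4
        rw [hK]; linear_combination e2
      · show a 3 = (K : ZMod 15) * 8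
        rw [hK]; linear_combination (-(a 3)) * h15
    · rintro ⟨k, rfl⟩
      have hk0 : (k : ZMod 15) ≠ 0 := k.ne_zero
      refine ⟨?_, ?_, ?_, k⁻¹, Or.inl ?_⟩
      · intro i
        fin_cases i
        · show (k : ZMod 15) * 1 ≠ 0
          intro h; exact hk0 (by linear_combination h)
        · show (k : ZMod 15) * 2 ≠ 0
          intro h; exact hk0 (by linear_combination 8 * h - (k : ZMod 15) * h15)
        · show (k : ZMod 15) * 4 ≠ 0
          intro h; exact hk0 (by linear_combination 4 * h - (k : ZMod 15) * h15)
        · show (k : ZMod 15) * 8 ≠ 0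
          intro h; exact hk0 (by linear_combination 2 * h - (k : ZMod 15) * h15)
      · show (k : ZMod 15) * 1 + (k : ZMod 15) * 2 + (k : ZMod 15) * 4 + (k : ZMod 15) * 8 = 0
        linear_combination (k : ZMod 15) * h15
      · intro c hc
        obtain ⟨hc1, _, _⟩ := hc
        show (k : ZMod 15) * 2 * c 0 + (k : ZMod 15) * 4 * c 1 + (k : ZMod 15) * 8 * c 2 = 0
        linear_combination -(k : ZMod 15) * hc1 + (k : ZMod 15) * c 2 * h15
      · have inv : ∀ x : ZMod 15, (↑k⁻¹ : ZMod 15) * ((k : ZMod 15) * x) = x := fun x => by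
          rw [← mul_assoc, Units.inv_mul, one_mul]
        show ((↑k⁻¹ : ZMod 15) * ((k : ZMod 15) * 1)).val +
            ((↑k⁻¹ : ZMod 15) * ((k : ZMod 15) * 2)).val +
            ((↑k⁻¹ : ZMod 15) * ((k : ZMod 15) * 4)).val +
            ((↑k⁻¹ : ZMod 15) * ((k : ZMod 15) * 8)).val = 15
        rw [inv, inv, inv, inv]
        decide
  refine ⟨hEq, ?_⟩
  rw [hEq]
  have himg : {a : Fin 4 → ZMod 15 | ∃ k : (ZMod 15)ˣ, a = (k : ZMod 15) • ![1, 2, 4, 8]}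
      = ↑((Finset.univ : Finset (ZMod 15)ˣ).image
          (fun k : (ZMod 15)ˣ => (k : ZMod 15) • (![1, 2, 4, 8] : Fin 4 → ZMod 15))) := by
    ext a
    simp [eq_comm]
  rw [himg, Set.ncard_coe_finset]
  decide
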